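/- arXiv:2204.09076 — 4 statements merged into one kernel-verified Lean document; each statement's English description precedes it below -/
import Mathlib

section
/- Let N = n² for an even positive integer n, and for 0 ≤ k, l < n/2 let k̃ = 2πk/n, l̃ = 2πl/n. Then the double sum over all pairs (k,l) with 1 ≤ k,l ≤ n/2 − 1 of 1/(1 − cos²(k̃)·cos²(l̃)) is Θ(N log N) as N → ∞. -/
open Real Filter Finset Asymptotics


lemma sin_lb {x : ℝ} (h0 : 0 ≤ x) (h1 : x ≤ π) : 2/π * min x (π - x) ≤ sin x := by
  rcases le_total x (π/2) with h | h
  · rw [min_eq_left (by linarith)]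
    exact Real.mul_le_sin h0 h
  · rw [min_eq_right (by linarith)]
    have := Real.mul_le_sin (x := π - x) (by linarith) (by linarith)
    rwa [Real.sin_pi_sub] at this

lemma sin_ub {x : ℝ} (h0 : 0 ≤ x) (h1 : x ≤ π) : sin x ≤ min x (π - x) := by
  refine le_min (Real.sin_le h0) ?_
  rw [← Real.sin_pi_sub]
  exact Real.sin_le (by linarith)

set_option maxHeartbeats 1000000 in
lemma term_bounds (m k l : ℕ) (hk : k ∈ Finset.Icc 1 (m-1)) (hl : l ∈ Finset.Icc 1 (m-1)) :
    (m:ℝ)^2/π^2 * (1/(((min k (m-k) : ℕ):ℝ)^2 + ((min l (m-l) : ℕ):ℝ)^2)) ≤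
      1/(1 - cos (π*k/m)^2 * cos (π*l/m)^2) ∧
    1/(1 - cos (π*k/m)^2 * cos (π*l/m)^2) ≤
      (m:ℝ)^2/2 * (1/(((min k (m-k) : ℕ):ℝ)^2 + ((min l (m-l) : ℕ):ℝ)^2)) := by
  simp only [Finset.mem_Icc] at hk hl
  have hkm : k < m := lt_of_le_of_lt hk.2 (Nat.sub_lt (by omega) one_pos)
  have hlm : l < m := lt_of_le_of_lt hl.2 (Nat.sub_lt (by omega) one_pos)
  have hm : 2 ≤ m := by omega
  have hm0 : (0:ℝ) < m := by exact_mod_cast (by omega : 0 < m)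
  have hmne : (m:ℝ) ≠ 0 := hm0.ne'
  set a : ℕ := min k (m-k) with ha
  set b : ℕ := min l (m-l) with hb
  have ha1 : 1 ≤ a := by omega
  have hb1 : 1 ≤ b := by omega
  have haR : (0:ℝ) < a := by exact_mod_cast ha1
  have hbR : (0:ℝ) < b := by exact_mod_cast hb1
  set θ : ℝ := π*k/m with hθ
  set φ : ℝ := π*l/m with hφ
  have hθ0 : 0 ≤ θ := by rw [hθ]; positivity
  have hθπ : θ ≤ π := by
    rw [hθ, div_le_iff₀ hm0]
    have : (k:ℝ) ≤ m := by exact_mod_cast hkm.le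
    nlinarith [pi_pos]
  have hφ0 : 0 ≤ φ := by rw [hφ]; positivity
  have hφπ : φ ≤ π := by
    rw [hφ, div_le_iff₀ hm0]
    have : (l:ℝ) ≤ m := by exact_mod_cast hlm.le
    nlinarith [pi_pos]
  have hminθ : min θ (π - θ) = π/m * (a:ℝ) := by
    have hc : (a:ℝ) = min (k:ℝ) ((m:ℝ) - k) := by
      rw [ha]; push_cast [Nat.cast_min, Nat.cast_sub hkm.le]; ring_nf
    rw [hc, mul_min_of_nonneg _ _ (by positivity : (0:ℝ) ≤ π/m)]
    congr 1
    · rw [hθ, div_mul_eq_mul_div]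
    · rw [hθ, div_mul_eq_mul_div, mul_sub, sub_div, mul_div_cancel_right₀ _ hmne]
  have hminφ : min φ (π - φ) = π/m * (b:ℝ) := by
    have hc : (b:ℝ) = min (l:ℝ) ((m:ℝ) - l) := by
      rw [hb]; push_cast [Nat.cast_min, Nat.cast_sub hlm.le]; ring_nf
    rw [hc, mul_min_of_nonneg _ _ (by positivity : (0:ℝ) ≤ π/m)]
    congr 1
    · rw [hφ, div_mul_eq_mul_div]
    · rw [hφ, div_mul_eq_mul_div, mul_sub, sub_div, mul_div_cancel_right₀ _ hmne]
  set s : ℝ := sin θ with hs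
  set t : ℝ := sin φ with ht
  have hslb : 2*(a:ℝ)/m ≤ s := by
    have h := sin_lb hθ0 hθπ
    rw [hminθ] at h
    have hπ := pi_pos
    calc 2*(a:ℝ)/m = 2/π * (π/m * a) := by field_simp
    _ ≤ s := h
  have htlb : 2*(b:ℝ)/m ≤ t := by
    have h := sin_lb hφ0 hφπ
    rw [hminφ] at h
    have hπ := pi_pos
    calc 2*(b:ℝ)/m = 2/π * (π/m * b) := by field_simp
    _ ≤ t := h
  have hsub : s ≤ π/m * a := by have h := sin_ub hθ0 hθπ; rwa [hminθ] at h
  have htub : t ≤ π/m * b := by have h := sin_ub hφ0 hφπ; rwa [hminφ] at h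
  have hs0 : 0 < s := lt_of_lt_of_le (by positivity) hslb
  have ht0 : 0 < t := lt_of_lt_of_le (by positivity) htlb
  have hs1 : s^2 ≤ 1 := Real.sin_sq_le_one θ
  have ht1 : t^2 ≤ 1 := Real.sin_sq_le_one φ
  have hcosθ : cos θ^2 = 1 - s^2 := by
    have h := Real.sin_sq_add_cos_sq θ; rw [hs]; linarith
  have hcosφ : cos φ^2 = 1 - t^2 := by
    have h := Real.sin_sq_add_cos_sq φ; rw [ht]; linarith
  have hD : 1 - cos θ^2 * cos φ^2 = s^2 + t^2 - s^2*t^2 := by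
    rw [hcosθ, hcosφ]; ring
  have h1 : 4*(a:ℝ)^2/(m:ℝ)^2 ≤ s^2 := by
    have h := mul_self_le_mul_self (by positivity : (0:ℝ) ≤ 2*(a:ℝ)/m) hslb
    calc 4*(a:ℝ)^2/(m:ℝ)^2 = (2*(a:ℝ)/m) * (2*(a:ℝ)/m) := by field_simp; ring
    _ ≤ s * s := h
    _ = s^2 := (sq s).symm
  have h2 : 4*(b:ℝ)^2/(m:ℝ)^2 ≤ t^2 := by
    have h := mul_self_le_mul_self (by positivity : (0:ℝ) ≤ 2*(b:ℝ)/m) htlb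
    calc 4*(b:ℝ)^2/(m:ℝ)^2 = (2*(b:ℝ)/m) * (2*(b:ℝ)/m) := by field_simp; ring
    _ ≤ t * t := h
    _ = t^2 := (sq t).symm
  have h1' : s^2 ≤ π^2*(a:ℝ)^2/(m:ℝ)^2 := by
    have h := mul_self_le_mul_self hs0.le hsub
    calc s^2 = s * s := sq s
    _ ≤ (π/m*a) * (π/m*a) := h
    _ = π^2*(a:ℝ)^2/(m:ℝ)^2 := by field_simp
  have h2' : t^2 ≤ π^2*(b:ℝ)^2/(m:ℝ)^2 := by
    have h := mul_self_le_mul_self ht0.le htub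
    calc t^2 = t * t := sq t
    _ ≤ (π/m*b) * (π/m*b) := h
    _ = π^2*(b:ℝ)^2/(m:ℝ)^2 := by field_simp
  set A : ℝ := (a:ℝ)^2 + (b:ℝ)^2 with hA
  have hA0 : 0 < A := by rw [hA]; positivity
  have hst : 2*(s^2*t^2) ≤ s^2 + t^2 := by
    nlinarith [mul_nonneg (sq_nonneg s) (sub_nonneg.2 ht1),
      mul_nonneg (sq_nonneg t) (sub_nonneg.2 hs1)]
  have hm2 : (0:ℝ) < (m:ℝ)^2 := by positivity
  have hDlb : 2*A/(m:ℝ)^2 ≤ 1 - cos θ^2 * cos φ^2 := by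
    rw [hD, hA, div_le_iff₀ hm2]
    rw [div_le_iff₀ hm2] at h1 h2
    nlinarith [mul_le_mul_of_nonneg_right hst (sq_nonneg (m:ℝ))]
  have hDub : 1 - cos θ^2 * cos φ^2 ≤ π^2*A/(m:ℝ)^2 := by
    rw [hD, hA, le_div_iff₀ hm2]
    rw [le_div_iff₀ hm2] at h1' h2'
    nlinarith [mul_le_mul_of_nonneg_right
      (mul_nonneg (sq_nonneg s) (sq_nonneg t) : (0:ℝ) ≤ s^2*t^2) (sq_nonneg (m:ℝ))]
  have hDpos : 0 < 1 - cos θ^2 * cos φ^2 := lt_of_lt_of_le (by positivity) hDlb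
  constructor
  · have h := one_div_le_one_div_of_le hDpos hDub
    have hπ := pi_pos
    have e : (m:ℝ)^2/π^2 * (1/A) = 1/(π^2*A/(m:ℝ)^2) := by
      rw [one_div_div, div_mul_div_comm, mul_one]
    rw [e]; exact h
  · have h := one_div_le_one_div_of_le (by positivity : (0:ℝ) < 2*A/(m:ℝ)^2) hDlb
    have e : 1/(2*A/(m:ℝ)^2) = (m:ℝ)^2/2 * (1/A) := by
      rw [one_div_div, div_mul_div_comm, mul_one]
    rw [← e]; exact h

lemma harm_le (m : ℕ) : ∑ k ∈ Finset.Icc 1 m, ((k:ℝ))⁻¹ ≤ 1 + Real.log m := by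
  have h := harmonic_le_one_add_log m
  rw [harmonic_eq_sum_Icc] at h
  push_cast at h
  exact h

lemma le_harm (m : ℕ) : Real.log (m+1) ≤ ∑ k ∈ Finset.Icc 1 m, ((k:ℝ))⁻¹ := by
  have h := log_add_one_le_harmonic m
  rw [harmonic_eq_sum_Icc] at h
  push_cast at h
  exact h

set_option maxHeartbeats 1000000 in
lemma sum_upper (m : ℕ) (hm : 2 ≤ m) :
    ∑ k ∈ Finset.Icc 1 (m-1), ∑ l ∈ Finset.Icc 1 (m-1),
      1/(((min k (m-k) : ℕ):ℝ)^2 + ((min l (m-l) : ℕ):ℝ)^2) ≤ 8*(1 + Real.log m) := by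
  have haa1 : ∀ k ∈ Finset.Icc 1 (m-1), 1 ≤ min k (m-k) := by
    intro k hk; rw [Finset.mem_Icc] at hk; omega
  set g : ℕ → ℕ → ℝ :=
    fun k l => if min l (m-l) ≤ min k (m-k) then 1/((min k (m-k) : ℕ):ℝ)^2 else 0 with hg
  have hgnn : ∀ k l, 0 ≤ g k l := by
    intro k l; rw [hg]; dsimp only; split <;> positivity
  have hpoint : ∀ k ∈ Finset.Icc 1 (m-1), ∀ l ∈ Finset.Icc 1 (m-1),
      1/(((min k (m-k) : ℕ):ℝ)^2 + ((min l (m-l) : ℕ):ℝ)^2) ≤ g k l + g l k := by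
    intro k hk l hl
    have h1 := haa1 k hk
    have h2 := haa1 l hl
    have hk0 : (0:ℝ) < ((min k (m-k):ℕ):ℝ) := by exact_mod_cast h1
    have hl0 : (0:ℝ) < ((min l (m-l):ℕ):ℝ) := by exact_mod_cast h2
    rcases le_total (min l (m-l)) (min k (m-k)) with h | h
    · have he : g k l = 1/((min k (m-k):ℕ):ℝ)^2 := by rw [hg]; simp only; rw [if_pos h]
      have hnn := hgnn l k
      have hle : 1/(((min k (m-k):ℕ):ℝ)^2 + ((min l (m-l):ℕ):ℝ)^2) ≤ 1/((min k (m-k):ℕ):ℝ)^2 :=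
        one_div_le_one_div_of_le (by positivity) (by nlinarith [sq_nonneg ((min l (m-l):ℕ):ℝ)])
      rw [he]; linarith
    · have he : g l k = 1/((min l (m-l):ℕ):ℝ)^2 := by rw [hg]; simp only; rw [if_pos h]
      have hnn := hgnn k l
      have hle : 1/(((min k (m-k):ℕ):ℝ)^2 + ((min l (m-l):ℕ):ℝ)^2) ≤ 1/((min l (m-l):ℕ):ℝ)^2 :=
        one_div_le_one_div_of_le (by positivity) (by nlinarith [sq_nonneg ((min k (m-k):ℕ):ℝ)])
      rw [he]; linarith
  have step1 : (∑ k ∈ Finset.Icc 1 (m-1), ∑ l ∈ Finset.Icc 1 (m-1),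
      1/(((min k (m-k) : ℕ):ℝ)^2 + ((min l (m-l) : ℕ):ℝ)^2)) ≤
      2 * ∑ k ∈ Finset.Icc 1 (m-1), ∑ l ∈ Finset.Icc 1 (m-1), g k l := by
    have h1 : (∑ k ∈ Finset.Icc 1 (m-1), ∑ l ∈ Finset.Icc 1 (m-1),
        1/(((min k (m-k) : ℕ):ℝ)^2 + ((min l (m-l) : ℕ):ℝ)^2)) ≤
        ∑ k ∈ Finset.Icc 1 (m-1), ∑ l ∈ Finset.Icc 1 (m-1), (g k l + g l k) :=
      Finset.sum_le_sum (fun k hk => Finset.sum_le_sum (fun l hl => hpoint k hk l hl))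
    have h2 : ∑ k ∈ Finset.Icc 1 (m-1), ∑ l ∈ Finset.Icc 1 (m-1), (g k l + g l k) =
        (∑ k ∈ Finset.Icc 1 (m-1), ∑ l ∈ Finset.Icc 1 (m-1), g k l) +
        ∑ k ∈ Finset.Icc 1 (m-1), ∑ l ∈ Finset.Icc 1 (m-1), g l k := by
      rw [← Finset.sum_add_distrib]
      exact Finset.sum_congr rfl (fun k _ => Finset.sum_add_distrib)
    have h3 : (∑ k ∈ Finset.Icc 1 (m-1), ∑ l ∈ Finset.Icc 1 (m-1), g l k) =
        ∑ k ∈ Finset.Icc 1 (m-1), ∑ l ∈ Finset.Icc 1 (m-1), g k l := Finset.sum_comm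
    linarith
  have hinner : ∀ k ∈ Finset.Icc 1 (m-1),
      ∑ l ∈ Finset.Icc 1 (m-1), g k l ≤ 2/((min k (m-k):ℕ):ℝ) := by
    intro k hk
    have h1 := haa1 k hk
    have hk0 : (0:ℝ) < ((min k (m-k):ℕ):ℝ) := by exact_mod_cast h1
    have hc : (Finset.Icc 1 (m-1)).filter (fun l => min l (m-l) ≤ min k (m-k)) ⊆
        Finset.Icc 1 (min k (m-k)) ∪ Finset.Icc (m - min k (m-k)) (m-1) := by
      intro l hl
      simp only [Finset.mem_filter, Finset.mem_Icc, Finset.mem_union] at *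
      omega
    have hcard : ((Finset.Icc 1 (m-1)).filter (fun l => min l (m-l) ≤ min k (m-k))).card
        ≤ 2 * min k (m-k) := by
      have hc1 := Finset.card_le_card hc
      have hc2 := Finset.card_union_le (Finset.Icc 1 (min k (m-k)))
        (Finset.Icc (m - min k (m-k)) (m-1))
      simp only [Nat.card_Icc] at hc1 hc2 ⊢
      omega
    have e1 : ∑ l ∈ Finset.Icc 1 (m-1), g k l =
        (((Finset.Icc 1 (m-1)).filter (fun l => min l (m-l) ≤ min k (m-k))).card : ℝ) *
          (1/((min k (m-k):ℕ):ℝ)^2) := by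
      rw [hg]
      simp only
      rw [← Finset.sum_filter, Finset.sum_const, nsmul_eq_mul]
    rw [e1]
    calc (((Finset.Icc 1 (m-1)).filter (fun l => min l (m-l) ≤ min k (m-k))).card : ℝ) *
          (1/((min k (m-k):ℕ):ℝ)^2)
        ≤ (2*((min k (m-k):ℕ):ℝ)) * (1/((min k (m-k):ℕ):ℝ)^2) := by
          apply mul_le_mul_of_nonneg_right _ (by positivity)
          exact_mod_cast hcard
    _ = 2/((min k (m-k):ℕ):ℝ) := by
      generalize hx : ((min k (m-k):ℕ):ℝ) = x at hk0
      field_simp [hk0.ne']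
  have hsplit : ∀ k ∈ Finset.Icc 1 (m-1),
      2/((min k (m-k):ℕ):ℝ) ≤ 2*((k:ℝ)⁻¹ + (((m-k:ℕ):ℝ))⁻¹) := by
    intro k hk
    rw [Finset.mem_Icc] at hk
    have hmk : 1 ≤ m - k := by omega
    have h1 : (0:ℝ) < k := by exact_mod_cast hk.1
    have h2 : (0:ℝ) < ((m-k:ℕ):ℝ) := by exact_mod_cast hmk
    rcases le_total k (m-k) with h | h
    · rw [min_eq_left h]
      have h3 : (0:ℝ) ≤ (((m-k:ℕ):ℝ))⁻¹ := by positivity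
      rw [div_eq_mul_inv]
      linarith
    · rw [min_eq_right h]
      have h3 : (0:ℝ) ≤ ((k:ℝ))⁻¹ := by positivity
      rw [div_eq_mul_inv]
      linarith
  have hre : ∑ k ∈ Finset.Icc 1 (m-1), (((m-k:ℕ):ℝ))⁻¹ =
      ∑ k ∈ Finset.Icc 1 (m-1), ((k:ℝ))⁻¹ := by
    apply Finset.sum_nbij' (i := fun k => m - k) (j := fun k => m - k)
    · intro a ha; rw [Finset.mem_Icc] at *; omega
    · intro a ha; rw [Finset.mem_Icc] at *; omega
    · intro a ha; rw [Finset.mem_Icc] at ha; omega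
    · intro a ha; rw [Finset.mem_Icc] at ha; omega
    · intro a ha; rfl
  have hH := harm_le (m-1)
  have hlog : Real.log (m-1 : ℕ) ≤ Real.log m := by
    apply Real.log_le_log
    · have : (1:ℕ) ≤ m - 1 := by omega
      exact_mod_cast Nat.lt_of_lt_of_le Nat.zero_lt_one (by exact_mod_cast this)
    · exact_mod_cast Nat.sub_le m 1
  calc (∑ k ∈ Finset.Icc 1 (m-1), ∑ l ∈ Finset.Icc 1 (m-1),
      1/(((min k (m-k) : ℕ):ℝ)^2 + ((min l (m-l) : ℕ):ℝ)^2))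
      ≤ 2 * ∑ k ∈ Finset.Icc 1 (m-1), ∑ l ∈ Finset.Icc 1 (m-1), g k l := step1
  _ ≤ 2 * ∑ k ∈ Finset.Icc 1 (m-1), 2/((min k (m-k):ℕ):ℝ) := by
      apply mul_le_mul_of_nonneg_left (Finset.sum_le_sum hinner) (by norm_num)
  _ ≤ 2 * ∑ k ∈ Finset.Icc 1 (m-1), 2*((k:ℝ)⁻¹ + (((m-k:ℕ):ℝ))⁻¹) := by
      apply mul_le_mul_of_nonneg_left (Finset.sum_le_sum hsplit) (by norm_num)
  _ = 4 * ((∑ k ∈ Finset.Icc 1 (m-1), ((k:ℝ))⁻¹) +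
        ∑ k ∈ Finset.Icc 1 (m-1), (((m-k:ℕ):ℝ))⁻¹) := by
      rw [← Finset.mul_sum, Finset.sum_add_distrib]; ring
  _ = 8 * ∑ k ∈ Finset.Icc 1 (m-1), ((k:ℝ))⁻¹ := by rw [hre]; ring
  _ ≤ 8 * (1 + Real.log (m-1 : ℕ)) := by
      apply mul_le_mul_of_nonneg_left hH (by norm_num)
  _ ≤ 8*(1 + Real.log m) := by linarith

set_option maxHeartbeats 1000000 in
lemma sum_lower (m : ℕ) (hm : 2 ≤ m) :
    Real.log ((m/2 : ℕ) + 1) / 2 ≤ ∑ k ∈ Finset.Icc 1 (m-1), ∑ l ∈ Finset.Icc 1 (m-1),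
      1/(((min k (m-k) : ℕ):ℝ)^2 + ((min l (m-l) : ℕ):ℝ)^2) := by
  have htermnn : ∀ k l : ℕ, (0:ℝ) ≤ 1/(((min k (m-k) : ℕ):ℝ)^2 + ((min l (m-l) : ℕ):ℝ)^2) := by
    intro k l; positivity
  have hsub : Finset.Icc 1 (m/2) ⊆ Finset.Icc 1 (m-1) := by
    apply Finset.Icc_subset_Icc le_rfl; omega
  have step1 : ∑ k ∈ Finset.Icc 1 (m/2), ∑ l ∈ Finset.Icc 1 (m/2),
      1/(((min k (m-k) : ℕ):ℝ)^2 + ((min l (m-l) : ℕ):ℝ)^2) ≤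
      ∑ k ∈ Finset.Icc 1 (m-1), ∑ l ∈ Finset.Icc 1 (m-1),
      1/(((min k (m-k) : ℕ):ℝ)^2 + ((min l (m-l) : ℕ):ℝ)^2) := by
    apply le_trans (Finset.sum_le_sum (fun k _ =>
      Finset.sum_le_sum_of_subset_of_nonneg hsub (fun l _ _ => htermnn k l)))
    apply Finset.sum_le_sum_of_subset_of_nonneg hsub
    intro k _ _
    exact Finset.sum_nonneg (fun l _ => htermnn k l)
  have step2 : ∑ k ∈ Finset.Icc 1 (m/2), ∑ l ∈ Finset.Icc 1 (m/2),
      1/(((min k (m-k) : ℕ):ℝ)^2 + ((min l (m-l) : ℕ):ℝ)^2) =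
      ∑ k ∈ Finset.Icc 1 (m/2), ∑ l ∈ Finset.Icc 1 (m/2), 1/((k:ℝ)^2 + (l:ℝ)^2) := by
    apply Finset.sum_congr rfl
    intro k hk
    apply Finset.sum_congr rfl
    intro l hl
    rw [Finset.mem_Icc] at hk hl
    rw [min_eq_left (by omega : k ≤ m - k), min_eq_left (by omega : l ≤ m - l)]
  have step3 : ∑ k ∈ Finset.Icc 1 (m/2), ((k:ℝ))⁻¹/2 ≤
      ∑ k ∈ Finset.Icc 1 (m/2), ∑ l ∈ Finset.Icc 1 (m/2), 1/((k:ℝ)^2 + (l:ℝ)^2) := by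
    apply Finset.sum_le_sum
    intro k hk
    rw [Finset.mem_Icc] at hk
    have hk0 : (0:ℝ) < k := by exact_mod_cast hk.1
    have hin : ∑ l ∈ Finset.Icc 1 k, 1/(2*(k:ℝ)^2) ≤ ∑ l ∈ Finset.Icc 1 k, 1/((k:ℝ)^2 + (l:ℝ)^2) := by
      apply Finset.sum_le_sum
      intro l hl
      rw [Finset.mem_Icc] at hl
      have hlk : (l:ℝ) ≤ k := by exact_mod_cast hl.2
      have hl0 : (0:ℝ) < l := by exact_mod_cast hl.1
      apply one_div_le_one_div_of_le (by positivity)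
      nlinarith
    have hmono : ∑ l ∈ Finset.Icc 1 k, 1/((k:ℝ)^2 + (l:ℝ)^2) ≤
        ∑ l ∈ Finset.Icc 1 (m/2), 1/((k:ℝ)^2 + (l:ℝ)^2) := by
      apply Finset.sum_le_sum_of_subset_of_nonneg
      · exact Finset.Icc_subset_Icc le_rfl hk.2
      · intro l _ _; positivity
    have hconst : ∑ l ∈ Finset.Icc 1 k, 1/(2*(k:ℝ)^2) = ((k:ℝ))⁻¹/2 := by
      rw [Finset.sum_const, Nat.card_Icc, nsmul_eq_mul]
      push_cast
      field_simp
    calc ((k:ℝ))⁻¹/2 = ∑ l ∈ Finset.Icc 1 k, 1/(2*(k:ℝ)^2) := hconst.symm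
    _ ≤ ∑ l ∈ Finset.Icc 1 k, 1/((k:ℝ)^2 + (l:ℝ)^2) := hin
    _ ≤ ∑ l ∈ Finset.Icc 1 (m/2), 1/((k:ℝ)^2 + (l:ℝ)^2) := hmono
  have step4 : Real.log ((m/2 : ℕ) + 1) / 2 ≤ ∑ k ∈ Finset.Icc 1 (m/2), ((k:ℝ))⁻¹/2 := by
    rw [← Finset.sum_div]
    have := le_harm (m/2)
    linarith
  linarith [step1, step2 ▸ step3, step4]

lemma F_upper (t : ℕ) (ht : 2 ≤ t) :
    ∑ k ∈ Finset.Icc 1 (t-1), ∑ l ∈ Finset.Icc 1 (t-1),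
      1/(1 - cos (π*k/t)^2 * cos (π*l/t)^2) ≤ (t:ℝ)^2/2 * (8*(1 + Real.log t)) := by
  have h1 : ∑ k ∈ Finset.Icc 1 (t-1), ∑ l ∈ Finset.Icc 1 (t-1),
      1/(1 - cos (π*k/t)^2 * cos (π*l/t)^2) ≤
      ∑ k ∈ Finset.Icc 1 (t-1), ∑ l ∈ Finset.Icc 1 (t-1),
      (t:ℝ)^2/2 * (1/(((min k (t-k) : ℕ):ℝ)^2 + ((min l (t-l) : ℕ):ℝ)^2)) :=
    Finset.sum_le_sum (fun k hk => Finset.sum_le_sum (fun l hl => (term_bounds t k l hk hl).2))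
  refine h1.trans ?_
  simp_rw [← Finset.mul_sum]
  exact mul_le_mul_of_nonneg_left (sum_upper t ht) (by positivity)

lemma F_lower (t : ℕ) (ht : 2 ≤ t) :
    (t:ℝ)^2/π^2 * (Real.log ((t/2 : ℕ) + 1) / 2) ≤
      ∑ k ∈ Finset.Icc 1 (t-1), ∑ l ∈ Finset.Icc 1 (t-1),
      1/(1 - cos (π*k/t)^2 * cos (π*l/t)^2) := by
  have h1 : ∑ k ∈ Finset.Icc 1 (t-1), ∑ l ∈ Finset.Icc 1 (t-1),
      (t:ℝ)^2/π^2 * (1/(((min k (t-k) : ℕ):ℝ)^2 + ((min l (t-l) : ℕ):ℝ)^2)) ≤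
      ∑ k ∈ Finset.Icc 1 (t-1), ∑ l ∈ Finset.Icc 1 (t-1),
      1/(1 - cos (π*k/t)^2 * cos (π*l/t)^2) :=
    Finset.sum_le_sum (fun k hk => Finset.sum_le_sum (fun l hl => (term_bounds t k l hk hl).1))
  refine le_trans ?_ h1
  simp_rw [← Finset.mul_sum]
  exact mul_le_mul_of_nonneg_left (sum_lower t ht) (by positivity)

lemma F_nonneg (t : ℕ) (ht : 2 ≤ t) :
    0 ≤ ∑ k ∈ Finset.Icc 1 (t-1), ∑ l ∈ Finset.Icc 1 (t-1),
      1/(1 - cos (π*k/t)^2 * cos (π*l/t)^2) := by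
  refine le_trans ?_ (F_lower t ht)
  have : (0:ℝ) ≤ Real.log ((t/2 : ℕ) + 1) := by
    apply Real.log_nonneg
    have : (1:ℕ) ≤ t/2 + 1 := by omega
    exact_mod_cast this
  positivity

lemma angle_eq (t j : ℕ) : 2*π*(j:ℝ)/((t+t:ℕ):ℝ) = π*j/t := by
  have hcast : ((t+t : ℕ):ℝ) = 2*t := by push_cast; ring
  rw [hcast, show (2:ℝ)*π*(j:ℝ) = 2*(π*j) by ring, mul_div_mul_left _ _ (two_ne_zero)]

lemma log_t_ge_one (t : ℕ) (ht : 4 ≤ t) : 1 ≤ Real.log t := by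
  have ht0 : (0:ℝ) < t := by exact_mod_cast Nat.lt_of_lt_of_le Nat.zero_lt_one (by omega)
  rw [Real.le_log_iff_exp_le ht0]
  have h4 : (4:ℝ) ≤ t := by exact_mod_cast ht
  have := Real.exp_one_lt_d9
  linarith

theorem stmt_3 :
    (fun n : ℕ => ∑ k ∈ Finset.Icc 1 (n / 2 - 1), ∑ l ∈ Finset.Icc 1 (n / 2 - 1),
        1 / (1 - Real.cos (2 * Real.pi * k / n) ^ 2 * Real.cos (2 * Real.pi * l / n) ^ 2))
      =Θ[Filter.atTop ⊓ Filter.principal {n : ℕ | Even n}]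
    (fun n : ℕ => ((n : ℝ) ^ 2) * Real.log ((n : ℝ) ^ 2)) := by
  constructor
  · rw [isBigO_iff]
    refine ⟨1, ?_⟩
    rw [eventually_inf_principal]
    filter_upwards [eventually_ge_atTop 8] with n hn8 hev
    replace hev : Even n := hev
    obtain ⟨t, rfl⟩ := hev
    have ht : 4 ≤ t := by omega
    have ht2 : (2:ℕ) ≤ t := by omega
    have htR : (0:ℝ) < t := by exact_mod_cast Nat.lt_of_lt_of_le Nat.zero_lt_one (by omega)
    have hdiv : (t + t)/2 - 1 = t - 1 := by omega
    have hcast : ((t+t : ℕ):ℝ) = 2*t := by push_cast; ring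
    have hsum : (∑ k ∈ Finset.Icc 1 ((t+t)/2-1), ∑ l ∈ Finset.Icc 1 ((t+t)/2-1),
        1/(1 - Real.cos (2*π*k/((t+t:ℕ):ℝ))^2 * Real.cos (2*π*l/((t+t:ℕ):ℝ))^2)) =
        ∑ k ∈ Finset.Icc 1 (t-1), ∑ l ∈ Finset.Icc 1 (t-1),
        1/(1 - cos (π*k/t)^2 * cos (π*l/t)^2) := by
      rw [hdiv]
      refine Finset.sum_congr rfl (fun k _ => Finset.sum_congr rfl (fun l _ => ?_))
      rw [angle_eq t k, angle_eq t l]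
    beta_reduce
    rw [hsum, hcast]
    have hg0 : (0:ℝ) ≤ (2*(t:ℝ))^2 * Real.log ((2*(t:ℝ))^2) := by
      have h1 : (1:ℝ) ≤ (t:ℝ) := by exact_mod_cast (by omega : 1 ≤ t)
      have : (1:ℝ) ≤ (2*(t:ℝ))^2 := by nlinarith
      have := Real.log_nonneg this
      positivity
    rw [Real.norm_eq_abs, Real.norm_eq_abs, abs_of_nonneg (F_nonneg t ht2), abs_of_nonneg hg0,
      one_mul]
    have hlog4 : Real.log ((2*(t:ℝ))^2) = Real.log 4 + 2*Real.log t := by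
      rw [show (2*(t:ℝ))^2 = 4*(t:ℝ)^2 by ring,
        Real.log_mul (by norm_num) (by positivity), Real.log_pow]
      push_cast; ring
    have hlt := log_t_ge_one t ht
    have hlog4nn : (0:ℝ) ≤ Real.log 4 := Real.log_nonneg (by norm_num)
    calc ∑ k ∈ Finset.Icc 1 (t-1), ∑ l ∈ Finset.Icc 1 (t-1),
        1/(1 - cos (π*k/t)^2 * cos (π*l/t)^2)
        ≤ (t:ℝ)^2/2 * (8*(1 + Real.log t)) := F_upper t ht2
    _ ≤ (2*(t:ℝ))^2 * Real.log ((2*(t:ℝ))^2) := by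
        rw [hlog4]
        nlinarith [sq_nonneg (t:ℝ)]
  · rw [isBigO_iff]
    refine ⟨32*π^2, ?_⟩
    rw [eventually_inf_principal]
    filter_upwards [eventually_ge_atTop 256] with n hn8 hev
    replace hev : Even n := hev
    obtain ⟨t, rfl⟩ := hev
    have ht : 128 ≤ t := by omega
    have ht2 : (2:ℕ) ≤ t := by omega
    have htR : (0:ℝ) < t := by exact_mod_cast Nat.lt_of_lt_of_le Nat.zero_lt_one (by omega)
    have hdiv : (t + t)/2 - 1 = t - 1 := by omega
    have hcast : ((t+t : ℕ):ℝ) = 2*t := by push_cast; ring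
    have hsum : (∑ k ∈ Finset.Icc 1 ((t+t)/2-1), ∑ l ∈ Finset.Icc 1 ((t+t)/2-1),
        1/(1 - Real.cos (2*π*k/((t+t:ℕ):ℝ))^2 * Real.cos (2*π*l/((t+t:ℕ):ℝ))^2)) =
        ∑ k ∈ Finset.Icc 1 (t-1), ∑ l ∈ Finset.Icc 1 (t-1),
        1/(1 - cos (π*k/t)^2 * cos (π*l/t)^2) := by
      rw [hdiv]
      refine Finset.sum_congr rfl (fun k _ => Finset.sum_congr rfl (fun l _ => ?_))
      rw [angle_eq t k, angle_eq t l]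
    beta_reduce
    rw [hsum, hcast]
    have hg0 : (0:ℝ) ≤ (2*(t:ℝ))^2 * Real.log ((2*(t:ℝ))^2) := by
      have h1 : (1:ℝ) ≤ (t:ℝ) := by exact_mod_cast (by omega : 1 ≤ t)
      have : (1:ℝ) ≤ (2*(t:ℝ))^2 := by nlinarith
      have := Real.log_nonneg this
      positivity
    rw [Real.norm_eq_abs, Real.norm_eq_abs, abs_of_nonneg (F_nonneg t ht2), abs_of_nonneg hg0]
    -- key log inequalities
    have hlog4 : Real.log ((2*(t:ℝ))^2) = 2*Real.log 2 + 2*Real.log t := by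
      rw [show (2*(t:ℝ))^2 = 4*(t:ℝ)^2 by ring,
        Real.log_mul (by norm_num) (by positivity), Real.log_pow,
        show (4:ℝ) = 2^2 by norm_num, Real.log_pow]
      push_cast; ring
    have hM : ((t:ℝ))/2 ≤ ((t/2 : ℕ):ℝ) + 1 := by
      have h : t ≤ 2*(t/2 + 1) := by omega
      have : (t:ℝ) ≤ 2*(((t/2:ℕ):ℝ) + 1) := by exact_mod_cast h
      linarith
    have hMlog : Real.log t - Real.log 2 ≤ Real.log (((t/2 : ℕ):ℝ) + 1) := by
      rw [← Real.log_div htR.ne' (by norm_num : (2:ℝ) ≠ 0)]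
      exact Real.log_le_log (by positivity) hM
    have hL : 3*Real.log 2 ≤ Real.log t := by
      have h8 : (8:ℝ) ≤ t := by exact_mod_cast (by omega : 8 ≤ t)
      have := Real.log_le_log (by norm_num : (0:ℝ) < 8) h8
      rw [show (8:ℝ) = 2^3 by norm_num, Real.log_pow] at this
      push_cast at this
      linarith
    have hlog2nn : (0:ℝ) ≤ Real.log 2 := Real.log_nonneg (by norm_num)
    have hkey : Real.log ((2*(t:ℝ))^2) ≤ 4 * Real.log (((t/2 : ℕ):ℝ) + 1) := by
      rw [hlog4]; linarith
    have hF := F_lower t ht2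
    have hπ := Real.pi_pos
    calc (2*(t:ℝ))^2 * Real.log ((2*(t:ℝ))^2)
        ≤ (2*(t:ℝ))^2 * (4 * Real.log (((t/2 : ℕ):ℝ) + 1)) :=
          mul_le_mul_of_nonneg_left hkey (by positivity)
    _ = 32*π^2 * ((t:ℝ)^2/π^2 * (Real.log (((t/2 : ℕ):ℝ) + 1) / 2)) := by
          field_simp
          ring
    _ ≤ 32*π^2 * (∑ k ∈ Finset.Icc 1 (t-1), ∑ l ∈ Finset.Icc 1 (t-1),
          1/(1 - cos (π*k/t)^2 * cos (π*l/t)^2)) := by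
          apply mul_le_mul_of_nonneg_left hF (by positivity)
end

section
/- Let N = n² for an even positive integer n, and for 1 ≤ k < n/2 let k̃ = 2πk/n. Then the sum over 1 ≤ k ≤ n/2 − 1 of 1/(1 − cos²(k̃)) is Θ(N) as N → ∞. -/
open Real Filter Finset Asymptotics

lemma icc_to_range (K : ℕ) (f : ℕ → ℝ) :
    ∑ k ∈ Finset.Icc 1 K, f k = ∑ i ∈ Finset.range K, f (1 + i) := by
  rw [← Finset.Ico_add_one_right_eq_Icc, Finset.sum_Ico_eq_sum_range]
  simp

lemma basel_le (K : ℕ) : ∑ k ∈ Finset.Icc 1 K, 1/((k:ℝ))^2 ≤ 2 := by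
  have h : ∀ K : ℕ, ∑ i ∈ Finset.range K, 1/(((i:ℝ)+1))^2 ≤ 2 - 1/((K:ℝ)+1/2) := by
    intro K
    induction K with
    | zero => norm_num
    | succ K ih =>
      rw [Finset.sum_range_succ]
      push_cast
      have h1 : (0:ℝ) < (K:ℝ)+1/2 := by positivity
      have h2 : (0:ℝ) < (K:ℝ)+3/2 := by positivity
      have key : 1/((K:ℝ)+1)^2 ≤ 1/((K:ℝ)+1/2) - 1/((K:ℝ)+3/2) := by
        rw [div_sub_div _ _ (ne_of_gt h1) (ne_of_gt h2),
          div_le_div_iff₀ (by positivity) (by positivity)]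
        nlinarith
      have : ((K:ℝ)+1)+1/2 = (K:ℝ)+3/2 := by ring
      rw [this]
      linarith
  calc ∑ k ∈ Finset.Icc 1 K, 1/((k:ℝ))^2 = ∑ i ∈ Finset.range K, 1/(((1+i:ℕ):ℝ))^2 :=
        icc_to_range K _
      _ = ∑ i ∈ Finset.range K, 1/(((i:ℝ)+1))^2 := by
        apply Finset.sum_congr rfl; intro i _; push_cast; ring_nf
      _ ≤ 2 - 1/((K:ℝ)+1/2) := h K
      _ ≤ 2 := by
        have : (0:ℝ) < (K:ℝ)+1/2 := by positivity
        have := one_div_pos.mpr this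
        linarith

lemma reflect_sum (K : ℕ) :
    ∑ k ∈ Finset.Icc 1 K, 1/(((K + 1 - k : ℕ)):ℝ)^2 = ∑ k ∈ Finset.Icc 1 K, 1/((k:ℝ))^2 := by
  rw [icc_to_range K (fun k => 1/(((K + 1 - k : ℕ)):ℝ)^2), icc_to_range K (fun k => 1/((k:ℝ))^2)]
  have := Finset.sum_range_reflect (fun j => 1/(((j + 1 : ℕ)):ℝ)^2) K
  calc ∑ i ∈ Finset.range K, 1/(((K + 1 - (1 + i) : ℕ)):ℝ)^2
      = ∑ i ∈ Finset.range K, 1/(((K - 1 - i + 1 : ℕ)):ℝ)^2 := by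
        apply Finset.sum_congr rfl
        intro i hi
        simp only [Finset.mem_range] at hi
        have h : K + 1 - (1 + i) = K - 1 - i + 1 := by omega
        rw [h]
    _ = ∑ i ∈ Finset.range K, 1/(((i + 1 : ℕ)):ℝ)^2 := this
    _ = _ := by
        apply Finset.sum_congr rfl
        intro i _
        have h : i + 1 = 1 + i := by omega
        rw [h]

lemma term_le (n k : ℕ) (hn : Even n) (hn4 : 4 ≤ n) (hk : k ∈ Finset.Icc 1 (n/2 - 1)) :
    1 / (1 - Real.cos (2 * Real.pi * k / n) ^ 2) ≤
      (n:ℝ)^2/16 * (1/((k:ℝ))^2 + 1/(((n/2 - k : ℕ)):ℝ)^2) := by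
  simp only [Finset.mem_Icc] at hk
  obtain ⟨hk1, hk2⟩ := hk
  set m : ℕ := n/2 - k with hm
  have hm1 : 1 ≤ m := by omega
  have hkm : k + m = n/2 := by omega
  have hn0 : (0:ℝ) < n := by positivity
  have hdvd : n/2*2 = n := Nat.div_mul_cancel hn.two_dvd
  have hhalf : ((n/2 : ℕ) : ℝ) = (n:ℝ)/2 := by
    have : (((n/2*2 : ℕ)):ℝ) = ((n:ℕ):ℝ) := by rw [hdvd]
    push_cast at this
    linarith
  have hkmR : (k:ℝ) + m = (n:ℝ)/2 := by
    rw [← hhalf, ← hkm]; push_cast; ring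
  set θ : ℝ := 2 * Real.pi * k / n with hθ
  rw [← Real.sin_sq]
  have hθpos : 0 < θ := by
    have := Real.pi_pos
    have hk0 : (0:ℝ) < k := by exact_mod_cast hk1
    apply div_pos (by positivity) hn0
  have hθlt : θ < Real.pi := by
    rw [hθ, div_lt_iff₀ hn0]
    have hkn : (k:ℝ) < (n:ℝ)/2 := by
      have : (1:ℝ) ≤ m := by exact_mod_cast hm1
      linarith [hkmR]
    nlinarith [Real.pi_pos]
  have key : ∃ c : ℕ, 1 ≤ c ∧ (c = k ∨ c = m) ∧ 4 * (c:ℝ) / n ≤ Real.sin θ := by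
    by_cases hc : θ ≤ Real.pi / 2
    · refine ⟨k, hk1, Or.inl rfl, ?_⟩
      have := Real.mul_le_sin (le_of_lt hθpos) hc
      have hpi := Real.pi_pos
      calc 4 * (k:ℝ) / n = 2 / Real.pi * θ := by
            rw [hθ]; field_simp; ring
        _ ≤ Real.sin θ := this
    · refine ⟨m, hm1, Or.inr rfl, ?_⟩
      push_neg at hc
      have hsub : Real.pi - θ = 2 * Real.pi * m / n := by
        have hmr : (m:ℝ) = (n:ℝ)/2 - k := by linarith [hkmR]
        rw [hθ, hmr]
        field_simp
      have h1 : 0 ≤ Real.pi - θ := by linarith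
      have h2 : Real.pi - θ ≤ Real.pi / 2 := by linarith
      have := Real.mul_le_sin h1 h2
      rw [Real.sin_pi_sub] at this
      have hpi := Real.pi_pos
      calc 4 * (m:ℝ) / n = 2 / Real.pi * (Real.pi - θ) := by
            rw [hsub]; field_simp; ring
        _ ≤ Real.sin θ := this
  obtain ⟨c, hc1, hcor, hcs⟩ := key
  have hcR : (0:ℝ) < c := by exact_mod_cast hc1
  have hq : (0:ℝ) < 4 * (c:ℝ) / n := by positivity
  have hspos : 0 < Real.sin θ := lt_of_lt_of_le hq hcs
  have hbound : 1 / Real.sin θ ^ 2 ≤ (n:ℝ)^2 / (16 * (c:ℝ)^2) := by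
    rw [div_le_div_iff₀ (by positivity) (by positivity)]
    have h4 : (4 * (c:ℝ) / n)^2 ≤ Real.sin θ ^ 2 := by
      apply sq_le_sq' _ hcs
      linarith
    have heq : (4 * (c:ℝ) / n)^2 = 16 * c^2 / n^2 := by field_simp; ring
    rw [heq] at h4
    rw [div_le_iff₀ (by positivity)] at h4
    nlinarith
  refine le_trans hbound ?_
  have hsum : 1/((c:ℝ))^2 ≤ 1/((k:ℝ))^2 + 1/(((m:ℕ)):ℝ)^2 := by
    have hk0 : (0:ℝ) < k := by exact_mod_cast hk1
    have hm0 : (0:ℝ) < m := by exact_mod_cast hm1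
    rcases hcor with h | h <;> subst h
    · have : (0:ℝ) ≤ 1/((m:ℕ):ℝ)^2 := by positivity
      linarith
    · have : (0:ℝ) ≤ 1/((k:ℕ):ℝ)^2 := by positivity
      linarith
  calc (n:ℝ)^2 / (16 * (c:ℝ)^2) = (n:ℝ)^2/16 * (1/((c:ℝ))^2) := by ring
    _ ≤ (n:ℝ)^2/16 * (1/((k:ℝ))^2 + 1/(((m:ℕ)):ℝ)^2) := by
        apply mul_le_mul_of_nonneg_left hsum (by positivity)

theorem stmt_4 :
    (fun n : ℕ => ∑ k ∈ Finset.Icc 1 (n / 2 - 1),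
        1 / (1 - Real.cos (2 * Real.pi * k / n) ^ 2))
      =Θ[Filter.atTop ⊓ Filter.principal {n : ℕ | Even n}]
    (fun n : ℕ => ((n : ℝ) ^ 2)) := by
  have pi_pos := Real.pi_pos
  constructor
  · -- upper bound: sum =O n²
    rw [Asymptotics.isBigO_iff]
    refine ⟨1, ?_⟩
    rw [Filter.eventually_inf_principal]
    filter_upwards [Filter.eventually_ge_atTop 4] with n hn4 hne
    have hne' : Even n := hne
    have hterm_nonneg : ∀ k ∈ Finset.Icc 1 (n/2-1),
        (0:ℝ) ≤ 1 / (1 - Real.cos (2 * Real.pi * k / n) ^ 2) := by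
      intro k _
      apply one_div_nonneg.mpr
      nlinarith [Real.cos_sq_le_one (2 * Real.pi * k / n)]
    have hsum_nonneg : (0:ℝ) ≤ ∑ k ∈ Finset.Icc 1 (n/2-1),
        1 / (1 - Real.cos (2 * Real.pi * k / n) ^ 2) := Finset.sum_nonneg hterm_nonneg
    rw [Real.norm_of_nonneg hsum_nonneg, Real.norm_of_nonneg (by positivity), one_mul]
    have step1 : ∑ k ∈ Finset.Icc 1 (n/2-1), 1 / (1 - Real.cos (2 * Real.pi * k / n) ^ 2)
        ≤ ∑ k ∈ Finset.Icc 1 (n/2-1), (n:ℝ)^2/16 * (1/((k:ℝ))^2 + 1/(((n/2 - k : ℕ)):ℝ)^2) :=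
      Finset.sum_le_sum (fun k hk => term_le n k hne' hn4 hk)
    have step2 : ∑ k ∈ Finset.Icc 1 (n/2-1), (n:ℝ)^2/16 * (1/((k:ℝ))^2 + 1/(((n/2 - k : ℕ)):ℝ)^2)
        ≤ (n:ℝ)^2/16 * 4 := by
      rw [← Finset.mul_sum]
      apply mul_le_mul_of_nonneg_left _ (by positivity)
      rw [Finset.sum_add_distrib]
      have e1 : ∑ k ∈ Finset.Icc 1 (n/2-1), 1/(((n/2 - k : ℕ)):ℝ)^2
          = ∑ k ∈ Finset.Icc 1 (n/2-1), 1/((k:ℝ))^2 := by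
        rw [← reflect_sum (n/2-1)]
        apply Finset.sum_congr rfl
        intro k hk
        simp only [Finset.mem_Icc] at hk
        congr 3
        omega
      rw [e1]
      linarith [basel_le (n/2-1)]
    nlinarith [sq_nonneg ((n:ℝ))]
  · -- lower bound: n² =O sum
    rw [Asymptotics.isBigO_iff]
    refine ⟨4 * Real.pi^2, ?_⟩
    rw [Filter.eventually_inf_principal]
    filter_upwards [Filter.eventually_ge_atTop 4] with n hn4 hne
    have hne' : Even n := hne
    have hn0 : (0:ℝ) < n := by positivity
    have hterm_nonneg : ∀ k ∈ Finset.Icc 1 (n/2-1),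
        (0:ℝ) ≤ 1 / (1 - Real.cos (2 * Real.pi * k / n) ^ 2) := by
      intro k _
      apply one_div_nonneg.mpr
      nlinarith [Real.cos_sq_le_one (2 * Real.pi * k / n)]
    have h1mem : 1 ∈ Finset.Icc 1 (n/2-1) := by
      simp only [Finset.mem_Icc]
      omega
    have hfirst : (n:ℝ)^2/(4*Real.pi^2) ≤ 1 / (1 - Real.cos (2 * Real.pi * 1 / n) ^ 2) := by
      rw [← Real.sin_sq]
      have hx : (0:ℝ) < 2 * Real.pi * 1 / n := by positivity
      have hxle : 2 * Real.pi * 1 / n ≤ Real.pi / 2 := by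
        rw [div_le_div_iff₀ hn0 (by norm_num)]
        have : (4:ℝ) ≤ n := by exact_mod_cast hn4
        nlinarith
      have hspos : 0 < Real.sin (2 * Real.pi * 1 / n) :=
        Real.sin_pos_of_pos_of_lt_pi hx (by linarith)
      have hsle : Real.sin (2 * Real.pi * 1 / n) ≤ 2 * Real.pi / n := by
        calc Real.sin (2 * Real.pi * 1 / n) ≤ 2 * Real.pi * 1 / n := Real.sin_le (le_of_lt hx)
          _ = 2 * Real.pi / n := by ring
      rw [div_le_div_iff₀ (by positivity) (by positivity)]
      have h2 : Real.sin (2 * Real.pi * 1 / n)^2 ≤ (2 * Real.pi / n)^2 := by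
        apply sq_le_sq' _ hsle
        have : (0:ℝ) < 2 * Real.pi / n := by positivity
        linarith
      have h3 : (2 * Real.pi / n)^2 = 4 * Real.pi^2 / n^2 := by field_simp; ring
      rw [h3, le_div_iff₀ (by positivity)] at h2
      nlinarith
    have hsum_ge : (n:ℝ)^2/(4*Real.pi^2) ≤ ∑ k ∈ Finset.Icc 1 (n/2-1),
        1 / (1 - Real.cos (2 * Real.pi * k / n) ^ 2) := by
      refine le_trans ?_ (Finset.single_le_sum hterm_nonneg h1mem)
      exact_mod_cast hfirst
    have hsum_nonneg : (0:ℝ) ≤ ∑ k ∈ Finset.Icc 1 (n/2-1),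
        1 / (1 - Real.cos (2 * Real.pi * k / n) ^ 2) := Finset.sum_nonneg hterm_nonneg
    rw [Real.norm_of_nonneg (by positivity), Real.norm_of_nonneg hsum_nonneg]
    calc (n:ℝ)^2 = 4*Real.pi^2 * ((n:ℝ)^2/(4*Real.pi^2)) := by field_simp
      _ ≤ 4*Real.pi^2 * _ := by
          apply mul_le_mul_of_nonneg_left hsum_ge (by positivity)
end

section
/- Let N = n² for an even positive integer n, and for 1 ≤ k < n/2 let k̃ = 2πk/n. Then the sum over 1 ≤ k ≤ n/2 − 1 of 1/(1 − cos²(k̃))² is Θ(N²) as N → ∞. -/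
open Real Filter Finset Asymptotics

lemma sum14 (M : ℕ) (hM : 1 ≤ M) :
    ∑ k ∈ Finset.Icc 1 M, (1:ℝ)/(k:ℝ)^4 ≤ 2 - 1/(M:ℝ) := by
  induction M, hM using Nat.le_induction with
  | base => norm_num
  | succ M hM ih =>
    rw [Finset.sum_Icc_succ_top (by omega)]
    have h1 : (1:ℝ) ≤ M := by exact_mod_cast hM
    have h2 : (0:ℝ) < (M:ℝ) + 1 := by linarith
    have key : (1:ℝ)/((M:ℝ)+1)^4 ≤ 1/(M:ℝ) - 1/((M:ℝ)+1) := by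
      rw [div_sub_div _ _ (by linarith) (ne_of_gt h2)]
      rw [div_le_div_iff₀ (by positivity) (by positivity)]
      nlinarith [sq_nonneg ((M:ℝ)+1), sq_nonneg ((M:ℝ)*((M:ℝ)+1))]
    push_cast
    linarith

lemma reflsum (h : ℕ) :
    ∑ k ∈ Finset.Icc 1 (h-1), (1:ℝ)/(((h - k : ℕ)):ℝ)^4
      = ∑ k ∈ Finset.Icc 1 (h-1), (1:ℝ)/(k:ℝ)^4 := by
  apply Finset.sum_nbij' (i := fun k => h - k) (j := fun k => h - k) <;>
    intro a ha <;> simp only [Finset.mem_Icc] at ha ⊢ <;> first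
      | omega
      | (congr 2; omega)

lemma sin_lb_s5 (h k : ℕ) (hh : 2 ≤ h) (hk1 : 1 ≤ k) (hk2 : k ≤ h - 1) :
    2 * ((min k (h - k) : ℕ) : ℝ) / (h:ℝ) ≤ Real.sin (2 * π * k / ((h:ℝ)+(h:ℝ))) := by
  have hπ := Real.pi_pos
  have hh0 : (0:ℝ) < h := by exact_mod_cast (by omega : 0 < h)
  have hx : 2 * π * k / ((h:ℝ)+(h:ℝ)) = π * k / h := by
    field_simp; ring
  rw [hx]
  rcases le_or_gt (2*k) h with hc | hc
  · have hmin : min k (h - k) = k := by omega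
    rw [hmin]
    have h1 : (0:ℝ) ≤ π * k / h := by positivity
    have h2 : π * k / h ≤ π / 2 := by
      rw [div_le_div_iff₀ hh0 (by norm_num)]
      have : (2*k : ℝ) ≤ h := by exact_mod_cast hc
      nlinarith
    have := Real.mul_le_sin h1 h2
    calc 2 * (k:ℝ) / h = 2 / π * (π * k / h) := by field_simp
    _ ≤ _ := this
  · have hmin : min k (h - k) = h - k := by omega
    rw [hmin]
    have hjk : ((h - k : ℕ) : ℝ) = (h:ℝ) - k := by
      have hkh : k ≤ h := by omega
      push_cast [hkh]; ring
    rw [hjk]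
    have heq : π * k / h = π - π * ((h:ℝ) - k) / h := by field_simp; ring
    rw [heq, Real.sin_pi_sub]
    have hkh : (k:ℝ) ≤ h := by exact_mod_cast (by omega : k ≤ h)
    have h1 : (0:ℝ) ≤ π * ((h:ℝ) - k) / h := by
      apply div_nonneg _ hh0.le
      nlinarith
    have h2 : π * ((h:ℝ) - k) / h ≤ π / 2 := by
      rw [div_le_div_iff₀ hh0 (by norm_num)]
      have : (h:ℝ) < 2*k := by exact_mod_cast hc
      nlinarith
    have := Real.mul_le_sin h1 h2
    calc 2 * ((h:ℝ) - k) / h = 2 / π * (π * ((h:ℝ)-k) / h) := by field_simp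
    _ ≤ _ := this

theorem stmt_5 :
    (fun n : ℕ => ∑ k ∈ Finset.Icc 1 (n / 2 - 1),
        1 / (1 - Real.cos (2 * Real.pi * k / n) ^ 2) ^ 2)
      =Θ[Filter.atTop ⊓ Filter.principal {n : ℕ | Even n}]
    (fun n : ℕ => (((n : ℝ) ^ 2) ^ 2)) := by
  have hπ := Real.pi_pos
  constructor
  · -- upper bound
    rw [isBigO_iff]
    refine ⟨1, ?_⟩
    rw [eventually_inf_principal]
    filter_upwards [eventually_ge_atTop 6] with n hn hev
    obtain ⟨h, rfl⟩ := hev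
    have hh : 3 ≤ h := by omega
    have hdiv : (h + h) / 2 = h := by omega
    have hh0 : (0:ℝ) < h := by exact_mod_cast (by omega : 0 < h)
    rw [hdiv]
    have hnonneg : ∀ k ∈ Finset.Icc 1 (h - 1),
        (0:ℝ) ≤ 1 / (1 - Real.cos (2 * π * k / ((h+h:ℕ):ℝ)) ^ 2) ^ 2 := by
      intro k _; positivity
    rw [Real.norm_eq_abs, Real.norm_eq_abs,
      abs_of_nonneg (Finset.sum_nonneg hnonneg), abs_of_nonneg (by positivity), one_mul]
    have hbound : ∀ k ∈ Finset.Icc 1 (h-1),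
        1 / (1 - Real.cos (2 * π * k / ((h+h:ℕ):ℝ)) ^ 2) ^ 2
          ≤ ((h:ℝ)^4/16) * ((1:ℝ)/(k:ℝ)^4 + 1/(((h-k:ℕ)):ℝ)^4) := by
      intro k hk
      simp only [Finset.mem_Icc] at hk
      have hcast : ((h+h:ℕ):ℝ) = (h:ℝ) + (h:ℝ) := by push_cast; ring
      rw [hcast, ← Real.sin_sq]
      set x := 2 * π * k / ((h:ℝ)+(h:ℝ)) with hx
      have hsin := sin_lb_s5 h k (by omega) hk.1 hk.2
      set m : ℕ := min k (h - k) with hm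
      have hm1 : 1 ≤ m := by omega
      have hmr : (0:ℝ) < m := by exact_mod_cast hm1
      have hs0 : (0:ℝ) < 2 * (m:ℝ) / h := by positivity
      have hsp : 0 < Real.sin x := lt_of_lt_of_le hs0 hsin
      have h1 : 1 / (Real.sin x ^2)^2 ≤ 1 / (2*(m:ℝ)/h)^4 := by
        rw [← pow_mul]
        apply one_div_le_one_div_of_le (by positivity)
        exact pow_le_pow_left₀ hs0.le hsin 4
      have h2 : 1 / (2*(m:ℝ)/h)^4 = (h:ℝ)^4/16 * (1/(m:ℝ)^4) := by
        field_simp; ring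
      have h3 : (1:ℝ)/(m:ℝ)^4 ≤ 1/(k:ℝ)^4 + 1/(((h-k:ℕ)):ℝ)^4 := by
        rcases min_choice k (h-k) with hc | hc
        · rw [hm, hc]
          have : (0:ℝ) ≤ 1/(((h-k:ℕ)):ℝ)^4 := by positivity
          linarith
        · rw [hm, hc]
          have : (0:ℝ) ≤ 1/(k:ℝ)^4 := by positivity
          linarith
      calc 1 / (Real.sin x ^2)^2 ≤ (h:ℝ)^4/16 * (1/(m:ℝ)^4) := by rw [← h2]; exact h1
      _ ≤ _ := mul_le_mul_of_nonneg_left h3 (by positivity)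
    have hsum := Finset.sum_le_sum hbound
    have hS : ∑ k ∈ Finset.Icc 1 (h-1), (1:ℝ)/(k:ℝ)^4 ≤ 2 := by
      have h14 := sum14 (h-1) (by omega)
      have hpos : (0:ℝ) < ((h-1:ℕ):ℝ) := by exact_mod_cast (by omega : 0 < h - 1)
      have hq : (0:ℝ) < (1:ℝ)/((h-1:ℕ):ℝ) := by positivity
      linarith
    have htot : ∑ k ∈ Finset.Icc 1 (h-1),
        ((h:ℝ)^4/16) * ((1:ℝ)/(k:ℝ)^4 + 1/(((h-k:ℕ)):ℝ)^4) ≤ (h:ℝ)^4/4 := by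
      rw [← Finset.mul_sum, Finset.sum_add_distrib, reflsum]
      have hle : ∑ k ∈ Finset.Icc 1 (h-1), (1:ℝ)/(k:ℝ)^4
          + ∑ k ∈ Finset.Icc 1 (h-1), (1:ℝ)/(k:ℝ)^4 ≤ 4 := by linarith
      calc (h:ℝ)^4/16 * _ ≤ (h:ℝ)^4/16 * 4 := mul_le_mul_of_nonneg_left hle (by positivity)
      _ = (h:ℝ)^4/4 := by ring
    have hfin : (h:ℝ)^4/4 ≤ ((((h+h:ℕ):ℝ))^2)^2 := by
      push_cast
      nlinarith [hh0, sq_nonneg ((h:ℝ))]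
    linarith
  · -- lower bound
    rw [isBigO_iff]
    refine ⟨(2*π)^4, ?_⟩
    rw [eventually_inf_principal]
    filter_upwards [eventually_ge_atTop 6] with n hn hev
    obtain ⟨h, rfl⟩ := hev
    have hh : 3 ≤ h := by omega
    have hdiv : (h + h) / 2 = h := by omega
    have hh0 : (0:ℝ) < h := by exact_mod_cast (by omega : 0 < h)
    rw [hdiv]
    have hnonneg : ∀ k ∈ Finset.Icc 1 (h - 1),
        (0:ℝ) ≤ 1 / (1 - Real.cos (2 * π * k / ((h+h:ℕ):ℝ)) ^ 2) ^ 2 := by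
      intro k _; positivity
    rw [Real.norm_eq_abs, Real.norm_eq_abs,
      abs_of_nonneg (Finset.sum_nonneg hnonneg), abs_of_nonneg (by positivity)]
    have hcast : ((h+h:ℕ):ℝ) = (h:ℝ) + (h:ℝ) := by push_cast; ring
    have hmem : (1:ℕ) ∈ Finset.Icc 1 (h-1) := by
      simp only [Finset.mem_Icc]; omega
    have hsingle := Finset.single_le_sum hnonneg hmem
    have hx1 : 2 * π * ((1:ℕ):ℝ) / ((h+h:ℕ):ℝ) = π / h := by
      rw [hcast]; push_cast; field_simp; ring
    rw [hx1] at hsingle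
    have hsin_le : Real.sin (π / h) ≤ π / h := Real.sin_le (by positivity)
    have hsin_pos : 0 < Real.sin (π / h) := by
      apply Real.sin_pos_of_pos_of_lt_pi (by positivity)
      rw [div_lt_iff₀ hh0]
      have h1h : (1:ℝ) < h := by exact_mod_cast (by omega : 1 < h)
      nlinarith
    have hterm : (h:ℝ)^4 / π^4 ≤ 1 / (1 - Real.cos (π / h) ^ 2) ^ 2 := by
      rw [← Real.sin_sq, ← pow_mul]
      have hs4 : Real.sin (π/h)^4 ≤ (π/(h:ℝ))^4 := pow_le_pow_left₀ hsin_pos.le hsin_le 4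
      have hd : (h:ℝ)^4/π^4 = 1 / (π/(h:ℝ))^4 := by
        field_simp
      rw [hd]
      exact one_div_le_one_div_of_le (by positivity) hs4
    have hgoal : ((((h+h:ℕ):ℝ))^2)^2 = (2*π)^4 * ((h:ℝ)^4/π^4) := by
      rw [hcast]
      field_simp
      ring
    rw [hgoal]
    have hC : (0:ℝ) ≤ (2*π)^4 := by positivity
    calc (2*π)^4 * ((h:ℝ)^4/π^4) ≤ (2*π)^4 * (1 / (1 - Real.cos (π / h) ^ 2) ^ 2) :=
          mul_le_mul_of_nonneg_left hterm hC
    _ ≤ (2*π)^4 * ∑ k ∈ Finset.Icc 1 (h - 1),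
          1 / (1 - Real.cos (2 * π * k / ((h+h:ℕ):ℝ)) ^ 2) ^ 2 :=
          mul_le_mul_of_nonneg_left hsingle hC
end

section
/- Let N = n² for an even positive integer n, and for 0 ≤ k, l < n/2 let k̃ = 2πk/n, l̃ = 2πl/n. Then the double sum over all pairs (k,l) with 1 ≤ k,l ≤ n/2 − 1 of (1/(1 − cos²(k̃)·cos²(l̃)))² is Θ(N²) as N → ∞. -/
open Real Filter Finset Asymptotics

lemma sum_inv_sq_aux : ∀ M : ℕ, ∑ k ∈ Finset.Icc 1 (M+1), (1 / ((k:ℝ))^2) ≤ 2 - 1/((M:ℝ)+1) := by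
  intro M
  induction M with
  | zero => norm_num
  | succ M ih =>
    rw [show M+1+1 = (M+1)+1 from rfl, Finset.sum_Icc_succ_top (by omega)]
    have h1 : (0:ℝ) < (M:ℝ)+1 := by positivity
    have h2 : (0:ℝ) < (M:ℝ)+2 := by positivity
    have key : (1:ℝ)/((M:ℝ)+2)^2 ≤ 1/((M:ℝ)+1) - 1/((M:ℝ)+2) := by
      rw [div_sub_div _ _ (ne_of_gt h1) (ne_of_gt h2), div_le_div_iff₀ (by positivity) (by positivity)]
      ring_nf
      nlinarith
    push_cast
    have e : ((M:ℝ)+1+1) = ((M:ℝ)+2) := by ring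
    rw [e]
    linarith

lemma sum_inv_sq_le (M : ℕ) : ∑ k ∈ Finset.Icc 1 M, (1 / ((k:ℝ))^2) ≤ 2 := by
  cases M with
  | zero => simp
  | succ M =>
    refine (sum_inv_sq_aux M).trans ?_
    have h : (0:ℝ) < (M:ℝ)+1 := by positivity
    have : (0:ℝ) ≤ 1/((M:ℝ)+1) := by positivity
    linarith

lemma sin_lb_s6 (n j : ℕ) (hn : 0 < n) (hj : 4*j ≤ n) : 4*j/(n:ℝ) ≤ Real.sin (2*π*j/n) := by
  have hnR : (0:ℝ) < n := by exact_mod_cast hn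
  have hjR : (4*(j:ℝ)) ≤ n := by exact_mod_cast hj
  have hx0 : (0:ℝ) ≤ 2*π*j/n := by positivity
  have hx1 : 2*π*(j:ℝ)/n ≤ π/2 := by
    rw [div_le_div_iff₀ hnR (by norm_num)]
    nlinarith [Real.pi_pos]
  have := Real.mul_le_sin hx0 hx1
  calc 4*(j:ℝ)/n = 2/π * (2*π*j/n) := by field_simp; ring
  _ ≤ _ := this

lemma upper_bd (n : ℕ) (hn4 : 4 ≤ n) (hev : Even n) :
    ∑ k ∈ Finset.Icc 1 (n / 2 - 1), ∑ l ∈ Finset.Icc 1 (n / 2 - 1),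
        (1 / (1 - Real.cos (2 * π * k / n) ^ 2 * Real.cos (2 * π * l / n) ^ 2)) ^ 2
      ≤ ((n:ℝ)^2)^2 := by
  have hmod := Nat.even_iff.mp hev
  set m := n / 2 with hm
  have hnm : n = 2*m := by omega
  have hm2 : 2 ≤ m := by omega
  have hnpos : (0:ℝ) < n := by positivity
  have hnR : (n:ℝ) = 2*(m:ℝ) := by exact_mod_cast congrArg (Nat.cast (R := ℝ)) hnm
  -- per-k key facts
  have key : ∀ k ∈ Finset.Icc 1 (m-1), 0 < Real.sin (2*π*k/n) ∧
      1 / Real.sin (2*π*k/n)^2 ≤ (n:ℝ)^2/16 * (1/((min k (m-k) : ℕ):ℝ)^2) := by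
    intro k hk
    rw [Finset.mem_Icc] at hk
    obtain ⟨hk1, hk2⟩ := hk
    have hμ1 : 1 ≤ min k (m-k) := by omega
    have hμR : (1:ℝ) ≤ ((min k (m-k):ℕ):ℝ) := by exact_mod_cast hμ1
    have hμpos : (0:ℝ) < ((min k (m-k):ℕ):ℝ) := by linarith
    have hsin : 4*((min k (m-k):ℕ):ℝ)/n ≤ Real.sin (2*π*k/n) := by
      rcases le_or_gt (2*k) m with h | h
      · have hmin : min k (m-k) = k := by omega
        rw [hmin]
        exact sin_lb_s6 n k (by omega) (by omega)
      · have hmin : min k (m-k) = m - k := by omega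
        rw [hmin]
        have h1 := sin_lb_s6 n (m-k) (by omega) (by omega)
        have hmk : ((m-k:ℕ):ℝ) = (m:ℝ) - k := by
          have := Nat.cast_sub (R := ℝ) (show k ≤ m by omega)
          exact_mod_cast this
        have e : 2*π*((m-k:ℕ):ℝ)/n = π - 2*π*k/n := by
          rw [hmk, hnR]
          have hmR : (0:ℝ) < (m:ℝ) := by exact_mod_cast (by omega : 0 < m)
          field_simp
        rwa [e, Real.sin_pi_sub] at h1
    have hspos : 0 < Real.sin (2*π*k/n) := by
      refine lt_of_lt_of_le ?_ hsin
      positivity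
    refine ⟨hspos, ?_⟩
    have hsq : (4*((min k (m-k):ℕ):ℝ)/n)^2 ≤ Real.sin (2*π*k/n)^2 := by
      apply pow_le_pow_left₀ (by positivity) hsin
    have hinv : 1/Real.sin (2*π*k/n)^2 ≤ 1/(4*((min k (m-k):ℕ):ℝ)/n)^2 :=
      one_div_le_one_div_of_le (by positivity) hsq
    have heq : 1/(4*((min k (m-k):ℕ):ℝ)/n)^2 = (n:ℝ)^2/16 * (1/((min k (m-k):ℕ):ℝ)^2) := by
      field_simp
      ring
    rw [heq] at hinv
    exact hinv
  set a : ℕ → ℝ := fun k => (n:ℝ)^2/16 * (1/((min k (m-k) : ℕ):ℝ)^2) with ha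
  have hterm : ∀ k ∈ Finset.Icc 1 (m-1), ∀ l ∈ Finset.Icc 1 (m-1),
      (1 / (1 - Real.cos (2*π*k/n)^2 * Real.cos (2*π*l/n)^2))^2 ≤ a k * a l := by
    intro k hk l hl
    obtain ⟨hsk, hak⟩ := key k hk
    obtain ⟨hsl, hal⟩ := key l hl
    have hck := Real.sin_sq_add_cos_sq (2*π*k/n)
    have hcl := Real.sin_sq_add_cos_sq (2*π*l/n)
    have hck0 := sq_nonneg (Real.cos (2*π*k/n))
    have hcl0 := sq_nonneg (Real.cos (2*π*l/n))
    have hck1 : Real.cos (2*π*k/n)^2 ≤ 1 := Real.cos_sq_le_one _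
    have hcl1 : Real.cos (2*π*l/n)^2 ≤ 1 := Real.cos_sq_le_one _
    have e1 : Real.cos (2*π*k/n)^2 * Real.cos (2*π*l/n)^2 ≤ Real.cos (2*π*k/n)^2 :=
      mul_le_of_le_one_right hck0 hcl1
    have e2 : Real.cos (2*π*k/n)^2 * Real.cos (2*π*l/n)^2 ≤ Real.cos (2*π*l/n)^2 :=
      mul_le_of_le_one_left hcl0 hck1
    have hD1 : Real.sin (2*π*k/n)^2 ≤ 1 - Real.cos (2*π*k/n)^2 * Real.cos (2*π*l/n)^2 := by
      linarith
    have hD2 : Real.sin (2*π*l/n)^2 ≤ 1 - Real.cos (2*π*k/n)^2 * Real.cos (2*π*l/n)^2 := by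
      linarith
    have hDpos : 0 < 1 - Real.cos (2*π*k/n)^2 * Real.cos (2*π*l/n)^2 :=
      lt_of_lt_of_le (by positivity) hD1
    have hprod : Real.sin (2*π*k/n)^2 * Real.sin (2*π*l/n)^2
        ≤ (1 - Real.cos (2*π*k/n)^2 * Real.cos (2*π*l/n)^2)^2 := by
      rw [sq (1 - Real.cos (2*π*k/n)^2 * Real.cos (2*π*l/n)^2)]
      exact mul_le_mul hD1 hD2 (sq_nonneg _) hDpos.le
    have h2 : (1 / (1 - Real.cos (2*π*k/n)^2 * Real.cos (2*π*l/n)^2))^2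
        ≤ (1/Real.sin (2*π*k/n)^2) * (1/Real.sin (2*π*l/n)^2) := by
      rw [div_pow, one_pow, one_div_mul_one_div]
      exact one_div_le_one_div_of_le (by positivity) hprod
    refine h2.trans ?_
    exact mul_le_mul hak hal (by positivity) (by positivity)
  have hreindex : ∑ k ∈ Finset.Icc 1 (m-1), (1/(((m-k:ℕ)):ℝ)^2)
      = ∑ k ∈ Finset.Icc 1 (m-1), (1/((k:ℝ))^2) := by
    apply Finset.sum_nbij' (fun k => m - k) (fun k => m - k)
    · intro k hk; rw [Finset.mem_Icc] at *; omega
    · intro k hk; rw [Finset.mem_Icc] at *; omega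
    · intro k hk; rw [Finset.mem_Icc] at hk; omega
    · intro k hk; rw [Finset.mem_Icc] at hk; omega
    · intro k hk; rfl
  have hsum : ∑ k ∈ Finset.Icc 1 (m-1), a k ≤ (n:ℝ)^2/4 := by
    have h1 : ∑ k ∈ Finset.Icc 1 (m-1), (1/((min k (m-k):ℕ):ℝ)^2) ≤ 4 := by
      have h2 : ∀ k ∈ Finset.Icc 1 (m-1), (1/((min k (m-k):ℕ):ℝ)^2)
          ≤ 1/((k:ℝ))^2 + 1/(((m-k:ℕ)):ℝ)^2 := by
        intro k hk
        rcases le_total k (m-k) with h | h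
        · rw [min_eq_left h]
          have : (0:ℝ) ≤ 1/(((m-k:ℕ)):ℝ)^2 := by positivity
          linarith
        · rw [min_eq_right h]
          have : (0:ℝ) ≤ 1/((k:ℝ))^2 := by positivity
          linarith
      calc ∑ k ∈ Finset.Icc 1 (m-1), (1/((min k (m-k):ℕ):ℝ)^2)
          ≤ ∑ k ∈ Finset.Icc 1 (m-1), (1/((k:ℝ))^2 + 1/(((m-k:ℕ)):ℝ)^2) :=
            Finset.sum_le_sum h2
        _ = ∑ k ∈ Finset.Icc 1 (m-1), (1/((k:ℝ))^2)
            + ∑ k ∈ Finset.Icc 1 (m-1), (1/(((m-k:ℕ)):ℝ)^2) := Finset.sum_add_distrib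
        _ = ∑ k ∈ Finset.Icc 1 (m-1), (1/((k:ℝ))^2)
            + ∑ k ∈ Finset.Icc 1 (m-1), (1/((k:ℝ))^2) := by rw [hreindex]
        _ ≤ 2 + 2 := add_le_add (sum_inv_sq_le _) (sum_inv_sq_le _)
        _ = 4 := by norm_num
    calc ∑ k ∈ Finset.Icc 1 (m-1), a k
        = (n:ℝ)^2/16 * ∑ k ∈ Finset.Icc 1 (m-1), (1/((min k (m-k):ℕ):ℝ)^2) := by
          rw [Finset.mul_sum]
      _ ≤ (n:ℝ)^2/16 * 4 := by
          apply mul_le_mul_of_nonneg_left h1 (by positivity)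
      _ = (n:ℝ)^2/4 := by ring
  have hanonneg : ∀ k, 0 ≤ a k := by intro k; positivity
  calc ∑ k ∈ Finset.Icc 1 (m-1), ∑ l ∈ Finset.Icc 1 (m-1),
        (1 / (1 - Real.cos (2*π*k/n)^2 * Real.cos (2*π*l/n)^2))^2
      ≤ ∑ k ∈ Finset.Icc 1 (m-1), ∑ l ∈ Finset.Icc 1 (m-1), a k * a l :=
        Finset.sum_le_sum (fun k hk => Finset.sum_le_sum (hterm k hk))
    _ = (∑ k ∈ Finset.Icc 1 (m-1), a k) * (∑ l ∈ Finset.Icc 1 (m-1), a l) :=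
        (Finset.sum_mul_sum _ _ _ _).symm
    _ ≤ ((n:ℝ)^2/4) * ((n:ℝ)^2/4) := by
        apply mul_le_mul hsum hsum (Finset.sum_nonneg fun k _ => hanonneg k) (by positivity)
    _ = ((n:ℝ)^2)^2/16 := by ring
    _ ≤ ((n:ℝ)^2)^2 := by
        have : (0:ℝ) ≤ ((n:ℝ)^2)^2 := by positivity
        linarith

lemma lower_bd (n : ℕ) (hn4 : 4 ≤ n) (hev : Even n) :
    ((n:ℝ)^2)^2 ≤ (64*π^4) *
      ∑ k ∈ Finset.Icc 1 (n / 2 - 1), ∑ l ∈ Finset.Icc 1 (n / 2 - 1),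
        (1 / (1 - Real.cos (2 * π * k / n) ^ 2 * Real.cos (2 * π * l / n) ^ 2)) ^ 2 := by
  have hnpos : (0:ℝ) < n := by positivity
  have hnR4 : (4:ℝ) ≤ n := by exact_mod_cast hn4
  have hpi := Real.pi_pos
  have h1mem : 1 ∈ Finset.Icc 1 (n / 2 - 1) := by
    rw [Finset.mem_Icc]; omega
  set x : ℝ := 2*π*((1:ℕ):ℝ)/n with hx
  have hxe : x = 2*π/n := by rw [hx]; norm_num
  have hx0 : 0 < x := by rw [hxe]; positivity
  have hx2 : x ≤ π/2 := by
    rw [hxe, div_le_div_iff₀ hnpos (by norm_num)]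
    nlinarith
  have hs0 : 0 < Real.sin x := Real.sin_pos_of_pos_of_lt_pi hx0 (by linarith)
  have hsx : Real.sin x ≤ x := Real.sin_le hx0.le
  have hpyth := Real.sin_sq_add_cos_sq x
  have hc0 := sq_nonneg (Real.cos x)
  have hDle : 1 - Real.cos x^2 * Real.cos x^2 ≤ 8*π^2/(n:ℝ)^2 := by
    have hxx : x^2 ≤ (2*π/n)^2 := by rw [hxe]
    have hs2 : Real.sin x^2 ≤ x^2 := pow_le_pow_left₀ hs0.le hsx 2
    have : 1 - Real.cos x^2 * Real.cos x^2 ≤ 2 * Real.sin x^2 := by nlinarith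
    have hfin : 2*(2*π/(n:ℝ))^2 = 8*π^2/(n:ℝ)^2 := by
      field_simp; ring
    linarith
  have hDpos : 0 < 1 - Real.cos x^2 * Real.cos x^2 := by nlinarith [sq_nonneg (Real.sin x)]
  have hinv : (n:ℝ)^2/(8*π^2) ≤ 1 / (1 - Real.cos x^2 * Real.cos x^2) := by
    have h1 : 1/(8*π^2/(n:ℝ)^2) ≤ 1 / (1 - Real.cos x^2 * Real.cos x^2) :=
      one_div_le_one_div_of_le hDpos hDle
    have h2 : 1/(8*π^2/(n:ℝ)^2) = (n:ℝ)^2/(8*π^2) := by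
      field_simp
    rwa [h2] at h1
  have hterm : ((n:ℝ)^2/(8*π^2))^2 ≤ (1 / (1 - Real.cos x^2 * Real.cos x^2))^2 :=
    pow_le_pow_left₀ (by positivity) hinv 2
  have hA : (1 / (1 - Real.cos x^2 * Real.cos x^2))^2
      ≤ ∑ l ∈ Finset.Icc 1 (n / 2 - 1),
        (1 / (1 - Real.cos x ^ 2 * Real.cos (2 * π * l / n) ^ 2)) ^ 2 :=
    Finset.single_le_sum (f := fun l : ℕ =>
        (1 / (1 - Real.cos x ^ 2 * Real.cos (2 * π * l / n) ^ 2)) ^ 2)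
      (fun l _ => sq_nonneg _) h1mem
  have hB : ∑ l ∈ Finset.Icc 1 (n / 2 - 1),
        (1 / (1 - Real.cos x ^ 2 * Real.cos (2 * π * l / n) ^ 2)) ^ 2
      ≤ ∑ k ∈ Finset.Icc 1 (n / 2 - 1), ∑ l ∈ Finset.Icc 1 (n / 2 - 1),
        (1 / (1 - Real.cos (2 * π * k / n) ^ 2 * Real.cos (2 * π * l / n) ^ 2)) ^ 2 :=
    Finset.single_le_sum (f := fun k : ℕ => ∑ l ∈ Finset.Icc 1 (n / 2 - 1),
        (1 / (1 - Real.cos (2 * π * k / n) ^ 2 * Real.cos (2 * π * l / n) ^ 2)) ^ 2)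
      (fun k _ => Finset.sum_nonneg fun l _ => sq_nonneg _) h1mem
  have hchain : ((n:ℝ)^2/(8*π^2))^2 ≤
      ∑ k ∈ Finset.Icc 1 (n / 2 - 1), ∑ l ∈ Finset.Icc 1 (n / 2 - 1),
        (1 / (1 - Real.cos (2 * π * k / n) ^ 2 * Real.cos (2 * π * l / n) ^ 2)) ^ 2 :=
    le_trans (le_trans hterm hA) hB
  have he : ((n:ℝ)^2/(8*π^2))^2 = ((n:ℝ)^2)^2/(64*π^4) := by
    field_simp; ring
  rw [he, div_le_iff₀ (by positivity)] at hchain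
  linarith

theorem stmt_6 :
    (fun n : ℕ => ∑ k ∈ Finset.Icc 1 (n / 2 - 1), ∑ l ∈ Finset.Icc 1 (n / 2 - 1),
        (1 / (1 - Real.cos (2 * Real.pi * k / n) ^ 2 * Real.cos (2 * Real.pi * l / n) ^ 2)) ^ 2)
      =Θ[Filter.atTop ⊓ Filter.principal {n : ℕ | Even n}]
    (fun n : ℕ => (((n : ℝ) ^ 2) ^ 2)) := by
  constructor
  · rw [Asymptotics.isBigO_iff]
    refine ⟨1, ?_⟩
    rw [Filter.eventually_inf_principal]
    filter_upwards [Filter.eventually_ge_atTop 4] with n hn4 hev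
    have hf : (0:ℝ) ≤ ∑ k ∈ Finset.Icc 1 (n / 2 - 1), ∑ l ∈ Finset.Icc 1 (n / 2 - 1),
        (1 / (1 - Real.cos (2 * π * k / n) ^ 2 * Real.cos (2 * π * l / n) ^ 2)) ^ 2 :=
      Finset.sum_nonneg fun k _ => Finset.sum_nonneg fun l _ => sq_nonneg _
    rw [Real.norm_eq_abs, Real.norm_eq_abs, one_mul, abs_of_nonneg hf,
      abs_of_nonneg (by positivity : (0:ℝ) ≤ ((n:ℝ)^2)^2)]
    exact upper_bd n hn4 hev
  · rw [Asymptotics.isBigO_iff]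
    refine ⟨64*π^4, ?_⟩
    rw [Filter.eventually_inf_principal]
    filter_upwards [Filter.eventually_ge_atTop 4] with n hn4 hev
    have hf : (0:ℝ) ≤ ∑ k ∈ Finset.Icc 1 (n / 2 - 1), ∑ l ∈ Finset.Icc 1 (n / 2 - 1),
        (1 / (1 - Real.cos (2 * π * k / n) ^ 2 * Real.cos (2 * π * l / n) ^ 2)) ^ 2 :=
      Finset.sum_nonneg fun k _ => Finset.sum_nonneg fun l _ => sq_nonneg _
    rw [Real.norm_eq_abs, Real.norm_eq_abs, abs_of_nonneg hf,
      abs_of_nonneg (by positivity : (0:ℝ) ≤ ((n:ℝ)^2)^2)]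
    exact lower_bd n hn4 hev
end
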